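/- Suppose λ = 0. Let (T, Y) be a mild solution of the wildfire system on [0, t*] with bounded initial data (T_0, Y_0), Y_0 ≥ 0. Then for every t ∈ [0, t*]: ‖T(·,t)‖_{L^∞(ℝ^d)} ≤ ‖T_0‖_{L^∞(ℝ^d)} + t ‖Y_0‖_{L^∞(ℝ^d)}; in particular no thermal blow-up occurs in finite time. -/

import Mathlib

open MeasureTheory Real Set Filter ENNReal

noncomputable section

/-- Euclidean space `ℝ^d`. -/
abbrev Rd (d : ℕ) := EuclideanSpace ℝ (Fin d)

/-- The Arrhenius reaction rate: `r(T) = exp(-1/T)` for `T > 0`, `0` otherwise. -/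
noncomputable def rrate (T : ℝ) : ℝ := if 0 < T then Real.exp (-1 / T) else 0

/-- The heat semigroup `e^{tΔ}φ`, given by convolution with the heat kernel
`Φ_t(x) = (4πt)^{-d/2} exp(-|x|²/(4t))` for `t ≠ 0`, and the identity at `t = 0`. -/
noncomputable def heatConv (d : ℕ) (t : ℝ) (φ : Rd d → ℝ) : Rd d → ℝ :=
  if t = 0 then φ
  else fun x => ∫ y : Rd d,
    (4 * Real.pi * t) ^ (-(d : ℝ) / 2) * Real.exp (-‖x - y‖ ^ 2 / (4 * t)) * φ y

/-- The Duhamel representative of the temperature at time `t`: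
`e^{-λt} e^{tΔ} T₀ + ∫₀ᵗ e^{-λ(t-τ)} e^{(t-τ)Δ}[Y(·,τ) r(T(·,τ))] dτ`. -/
noncomputable def duhamelRep (d : ℕ) (lam : ℝ) (T0 : Rd d → ℝ)
    (T Y : Rd d → ℝ → ℝ) (t : ℝ) (x : Rd d) : ℝ :=
  Real.exp (-lam * t) * heatConv d t T0 x
    + ∫ τ in Set.Ioc (0 : ℝ) t,
        Real.exp (-lam * (t - τ)) *
          heatConv d (t - τ) (fun y => Y y τ * rrate (T y τ)) x

/-- Continuity of the curve `t ↦ T(·,t)` into `L^p(ℝ^d)`, on the time set `I`. -/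
def ContinuousIntoLp (d : ℕ) (p : ℝ≥0∞) (I : Set ℝ) (T : Rd d → ℝ → ℝ) : Prop :=
  ∀ t₀ ∈ I, Filter.Tendsto (fun t => eLpNorm (fun x => T x t - T x t₀) p volume)
    (nhdsWithin t₀ I) (nhds 0)

/-- A mild solution `(T, Y)` of the wildfire reaction-diffusion system
`T_t = (Δ - λ)T + Y r(T)`, `Y_t = -β Y r(T)` with data `(T₀, Y₀)`, on the time set `I`:
the temperature satisfies the Duhamel formula (a.e. in `x`) and the fuel satisfies
`Y(x,t) = Y₀(x) exp(-β ∫₀ᵗ r(T(x,σ)) dσ)`, with both curves continuous into `L^∞`. -/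
structure IsMildSolutionOn (d : ℕ) (lam beta : ℝ) (I : Set ℝ)
    (T0 Y0 : Rd d → ℝ) (T Y : Rd d → ℝ → ℝ) : Prop where
  meas_T0 : Measurable T0
  meas_Y0 : Measurable Y0
  bdd_T0 : eLpNorm T0 ⊤ volume < ⊤
  bdd_Y0 : eLpNorm Y0 ⊤ volume < ⊤
  meas_T : ∀ t ∈ I, Measurable fun x => T x t
  meas_Y : ∀ t ∈ I, Measurable fun x => Y x t
  cont_T : ContinuousIntoLp d ⊤ I T
  cont_Y : ContinuousIntoLp d ⊤ I Y
  duhamel : ∀ t ∈ I, (fun x => T x t) =ᵐ[volume] duhamelRep d lam T0 T Y t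
  fuel : ∀ x, ∀ t ∈ I,
    Y x t = Y0 x * Real.exp (-beta * ∫ σ in Set.Ioc (0 : ℝ) t, rrate (T x σ))

/-- The `X_{t*}`-norm: `sup_{t ∈ I} [(1+t)^{d/2} ‖T(·,t)‖_{L^∞} + ‖T(·,t)‖_{L¹}]`. -/
noncomputable def XnormOn (d : ℕ) (I : Set ℝ) (T : Rd d → ℝ → ℝ) : ℝ≥0∞ :=
  ⨆ t ∈ I, (ENNReal.ofReal ((1 + t) ^ ((d : ℝ) / 2)) * eLpNorm (fun x => T x t) ⊤ volume
    + eLpNorm (fun x => T x t) 1 volume)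

end

section AuxLemmas

open MeasureTheory Real Set Filter ENNReal

lemma rrate_nonneg' (T : ℝ) : 0 ≤ rrate T := by
  unfold rrate; split
  · exact (Real.exp_pos _).le
  · exact le_refl 0

lemma rrate_le_one' (T : ℝ) : rrate T ≤ 1 := by
  unfold rrate; split
  · rename_i h
    apply Real.exp_le_one_iff.mpr
    exact div_nonpos_of_nonpos_of_nonneg (by norm_num) h.le
  · exact zero_le_one

lemma measurable_rrate' : Measurable rrate := by
  unfold rrate
  exact Measurable.ite (measurableSet_lt measurable_const measurable_id)
    (Real.measurable_exp.comp (measurable_const.div measurable_id)) measurable_const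

lemma integrable_gauss (d : ℕ) {b : ℝ} (hb : 0 < b) :
    Integrable (fun v : Rd d => Real.exp (-b * ‖v‖ ^ 2)) := by
  have h := (GaussianFourier.integrable_cexp_neg_mul_sq_norm_add
    (V := Rd d) (b := (b : ℂ)) (by simpa using hb) 0 (0 : Rd d)).norm
  refine h.congr (Filter.Eventually.of_forall fun v => ?_)
  have heq : (-(b : ℂ) * (‖v‖ : ℂ) ^ 2 + 0 * ((inner ℝ (0 : Rd d) v : ℝ) : ℂ))
      = ((-b * ‖v‖ ^ 2 : ℝ) : ℂ) := by push_cast; ring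
  simp only [heq, Complex.norm_exp, Complex.ofReal_re]

lemma heat_mass (d : ℕ) {t : ℝ} (ht : 0 < t) (x : Rd d) :
    ∫ y : Rd d, (4 * Real.pi * t) ^ (-(d : ℝ) / 2)
      * Real.exp (-‖x - y‖ ^ 2 / (4 * t)) = 1 := by
  have h4 : (0 : ℝ) < 4 * Real.pi * t := by positivity
  have hb : (0 : ℝ) < 1 / (4 * t) := by positivity
  rw [integral_const_mul]
  have h1 : ∀ y : Rd d, Real.exp (-‖x - y‖ ^ 2 / (4 * t))
      = (fun v : Rd d => Real.exp (-(1 / (4 * t)) * ‖v‖ ^ 2)) (x - y) := by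
    intro y; congr 1; ring
  rw [show (fun y : Rd d => Real.exp (-‖x - y‖ ^ 2 / (4 * t)))
      = fun y : Rd d => (fun v : Rd d => Real.exp (-(1 / (4 * t)) * ‖v‖ ^ 2)) (x - y)
      from funext h1]
  rw [integral_sub_left_eq_self (fun v : Rd d => Real.exp (-(1 / (4 * t)) * ‖v‖ ^ 2)) volume x]
  rw [GaussianFourier.integral_rexp_neg_mul_sq_norm hb]
  have hfr : (Module.finrank ℝ (Rd d) : ℝ) = (d : ℝ) := by
    rw [finrank_euclideanSpace_fin]
  rw [hfr]
  have hpi : Real.pi / (1 / (4 * t)) = 4 * Real.pi * t := by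
    field_simp
  rw [hpi, ← Real.rpow_add h4, show (-(d : ℝ) / 2 + (d : ℝ) / 2) = 0 by ring, Real.rpow_zero]

lemma heatConv_norm_le (d : ℕ) {t : ℝ} (ht : 0 < t) {φ : Rd d → ℝ} (hφ : Measurable φ)
    {C : ℝ} (hC : 0 ≤ C) (hb : ∀ᵐ y : Rd d, ‖φ y‖ ≤ C) (x : Rd d) :
    ‖heatConv d t φ x‖ ≤ C := by
  rw [heatConv, if_neg ht.ne']
  have h4 : (0 : ℝ) < 4 * Real.pi * t := by positivity
  have hb4 : (0 : ℝ) < 1 / (4 * t) := by positivity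
  set K : Rd d → ℝ := fun y =>
    (4 * Real.pi * t) ^ (-(d : ℝ) / 2) * Real.exp (-‖x - y‖ ^ 2 / (4 * t)) with hK
  have hKnn : ∀ y, 0 ≤ K y := fun y =>
    mul_nonneg (Real.rpow_pos_of_pos h4 _).le (Real.exp_pos _).le
  have hKint : Integrable K := by
    have h0 := ((integrable_gauss d hb4).comp_sub_left x).const_mul
      ((4 * Real.pi * t) ^ (-(d : ℝ) / 2))
    refine h0.congr (Filter.Eventually.of_forall fun y => ?_)
    simp only [hK]
    congr 1
    congr 1
    ring
  calc ‖∫ y : Rd d, K y * φ y‖ ≤ ∫ y : Rd d, ‖K y * φ y‖ :=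
        norm_integral_le_integral_norm _
    _ ≤ ∫ y : Rd d, K y * C := by
        refine integral_mono_of_nonneg (Filter.Eventually.of_forall fun y => norm_nonneg _)
          (hKint.mul_const C) ?_
        filter_upwards [hb] with y hy
        rw [norm_mul, Real.norm_of_nonneg (hKnn y)]
        exact mul_le_mul_of_nonneg_left hy (hKnn y)
    _ = C := by
        rw [integral_mul_const, hK, heat_mass d ht x, one_mul]

end AuxLemmas

/-- For `λ = 0` and a mild solution on `[0,t*]` with bounded data and
`Y₀ ≥ 0`: `‖T(·,t)‖_{L^∞} ≤ ‖T₀‖_{L^∞} + t ‖Y₀‖_{L^∞}` for all `t ∈ [0,t*]`;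
in particular no thermal blow-up occurs in finite time. -/
theorem temperature_linfty_bound_lambda_zero
    (d : ℕ) (hd : 1 ≤ d) (beta : ℝ) (hbeta : 0 ≤ beta)
    (tstar : ℝ) (htstar : 0 < tstar)
    (T0 Y0 : Rd d → ℝ) (T Y : Rd d → ℝ → ℝ)
    (hY0 : ∀ x, 0 ≤ Y0 x)
    (hsol : IsMildSolutionOn d 0 beta (Set.Icc 0 tstar) T0 Y0 T Y) :
    ∀ t ∈ Set.Icc (0 : ℝ) tstar,
      eLpNorm (fun x => T x t) ⊤ volume
        ≤ eLpNorm T0 ⊤ volume + ENNReal.ofReal t * eLpNorm Y0 ⊤ volume := by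
  obtain ⟨mT0, mY0, bT0, bY0, mT, mY, cT, cY, duh, fuel⟩ := hsol
  set C0 : ℝ := (eLpNorm T0 ⊤ volume).toReal with hC0def
  set C1 : ℝ := (eLpNorm Y0 ⊤ volume).toReal with hC1def
  have hC0 : 0 ≤ C0 := ENNReal.toReal_nonneg
  have hC1 : 0 ≤ C1 := ENNReal.toReal_nonneg
  have haeT0 : ∀ᵐ x : Rd d ∂volume, ‖T0 x‖ ≤ C0 := by
    filter_upwards [enorm_ae_le_eLpNormEssSup T0 volume] with x hx
    have := ENNReal.toReal_mono (ne_of_lt (by simpa [eLpNorm_exponent_top] using bT0)) hx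
    simpa [eLpNorm_exponent_top, hC0def] using this
  have haeY0 : ∀ᵐ x : Rd d ∂volume, ‖Y0 x‖ ≤ C1 := by
    filter_upwards [enorm_ae_le_eLpNormEssSup Y0 volume] with x hx
    have := ENNReal.toReal_mono (ne_of_lt (by simpa [eLpNorm_exponent_top] using bY0)) hx
    simpa [eLpNorm_exponent_top, hC1def] using this
  intro t ht
  have ht0 : 0 ≤ t := ht.1
  -- bound on the first Duhamel term
  have h1 : ∀ᵐ x : Rd d ∂volume, ‖heatConv d t T0 x‖ ≤ C0 := by
    rcases eq_or_lt_of_le ht0 with h | h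
    · simp only [heatConv, if_pos h.symm]
      exact haeT0
    · exact Filter.Eventually.of_forall fun x => heatConv_norm_le d h mT0 hC0 haeT0 x
  -- bound on the fuel term, for τ in the interval
  have hYb : ∀ τ ∈ Set.Icc (0 : ℝ) tstar,
      ∀ᵐ y : Rd d ∂volume, ‖Y y τ * rrate (T y τ)‖ ≤ C1 := by
    intro τ hτ
    filter_upwards [haeY0] with y hy
    have hInt : 0 ≤ ∫ σ in Set.Ioc (0 : ℝ) τ, rrate (T y σ) :=
      integral_nonneg fun σ => rrate_nonneg' _
    have hexp : Real.exp (-beta * ∫ σ in Set.Ioc (0 : ℝ) τ, rrate (T y σ)) ≤ 1 := by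
      apply Real.exp_le_one_iff.mpr
      have : 0 ≤ beta * ∫ σ in Set.Ioc (0 : ℝ) τ, rrate (T y σ) := mul_nonneg hbeta hInt
      linarith
    have hYnn : 0 ≤ Y y τ := by
      rw [fuel y τ hτ]
      exact mul_nonneg (hY0 y) (Real.exp_pos _).le
    have hYle : Y y τ ≤ Y0 y := by
      rw [fuel y τ hτ]
      calc Y0 y * Real.exp (-beta * ∫ σ in Set.Ioc (0 : ℝ) τ, rrate (T y σ))
          ≤ Y0 y * 1 := mul_le_mul_of_nonneg_left hexp (hY0 y)
        _ = Y0 y := mul_one _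
    rw [Real.norm_of_nonneg (mul_nonneg hYnn (rrate_nonneg' _))]
    calc Y y τ * rrate (T y τ) ≤ Y y τ * 1 :=
          mul_le_mul_of_nonneg_left (rrate_le_one' _) hYnn
      _ = Y y τ := mul_one _
      _ ≤ Y0 y := hYle
      _ ≤ ‖Y0 y‖ := le_abs_self _
      _ ≤ C1 := hy
  -- bound on the second Duhamel term
  have h2 : ∀ x : Rd d,
      ‖∫ τ in Set.Ioc (0 : ℝ) t,
        heatConv d (t - τ) (fun y => Y y τ * rrate (T y τ)) x‖ ≤ C1 * t := by
    intro x
    haveI : IsFiniteMeasure (volume.restrict (Set.Ioc (0 : ℝ) t)) :=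
      ⟨by rw [Measure.restrict_apply_univ]; exact measure_Ioc_lt_top⟩
    have hne : ∀ᵐ τ : ℝ ∂volume.restrict (Set.Ioc (0 : ℝ) t), τ ≠ t := by
      refine Filter.Eventually.filter_mono (ae_mono Measure.restrict_le_self) ?_
      rw [ae_iff]
      have : {τ : ℝ | ¬ τ ≠ t} = {t} := by ext τ; simp
      rw [this]
      exact Real.volume_singleton
    have hb : ∀ᵐ τ ∂volume.restrict (Set.Ioc (0 : ℝ) t),
        ‖heatConv d (t - τ) (fun y => Y y τ * rrate (T y τ)) x‖ ≤ C1 := by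
      filter_upwards [ae_restrict_mem measurableSet_Ioc, hne] with τ hmem hneq
      have hτI : τ ∈ Set.Icc (0 : ℝ) tstar := ⟨hmem.1.le, hmem.2.trans ht.2⟩
      have htτ : 0 < t - τ := sub_pos.mpr (lt_of_le_of_ne hmem.2 hneq)
      have hmeas : Measurable fun y : Rd d => Y y τ * rrate (T y τ) :=
        (mY τ hτI).mul (measurable_rrate'.comp (mT τ hτI))
      exact heatConv_norm_le d htτ hmeas hC1 (hYb τ hτI) x
    have := norm_integral_le_of_norm_le_const hb
    rwa [measureReal_restrict_apply_univ, measureReal_def, Real.volume_Ioc, sub_zero,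
      ENNReal.toReal_ofReal ht0] at this
  -- combine
  have hbound : ∀ᵐ x : Rd d ∂volume, ‖duhamelRep d 0 T0 T Y t x‖ ≤ C0 + C1 * t := by
    filter_upwards [h1] with x hx1
    rw [duhamelRep]
    simp only [neg_zero, zero_mul, Real.exp_zero, one_mul]
    calc ‖heatConv d t T0 x + ∫ τ in Set.Ioc (0 : ℝ) t,
            heatConv d (t - τ) (fun y => Y y τ * rrate (T y τ)) x‖
        ≤ ‖heatConv d t T0 x‖ + ‖∫ τ in Set.Ioc (0 : ℝ) t,
            heatConv d (t - τ) (fun y => Y y τ * rrate (T y τ)) x‖ := norm_add_le _ _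
      _ ≤ C0 + C1 * t := add_le_add hx1 (h2 x)
  have hmain : eLpNorm (fun x => T x t) ⊤ volume ≤ ENNReal.ofReal (C0 + C1 * t) := by
    rw [eLpNorm_congr_ae (duh t ht)]
    have := eLpNorm_le_of_ae_bound (p := (⊤ : ℝ≥0∞)) (μ := (volume : Measure (Rd d))) hbound
    simpa using this
  refine hmain.trans ?_
  rw [ENNReal.ofReal_add hC0 (mul_nonneg hC1 ht0), ENNReal.ofReal_mul hC1]
  rw [hC0def, hC1def, ENNReal.ofReal_toReal bT0.ne, ENNReal.ofReal_toReal bY0.ne]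
  rw [mul_comm]
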